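/- arXiv:0706.2901 — 5 statements merged into one kernel-verified Lean document; each statement's English description precedes it below -/
import Mathlib

section
/- Let n ≥ 1 and let F be an n×n real matrix. If there exist an n×n real matrix H of rank 1 and a real number α such that F + αH is Hurwitz, then every complex eigenvalue λ of F with Re(λ) ≥ 0 has geometric multiplicity at most 1. -/
open Matrix

/-- A real square matrix is Hurwitz (stable) if every complex eigenvalue has
negative real part. -/
def IsHurwitz {n : ℕ} (M : Matrix (Fin n) (Fin n) ℝ) : Prop :=
  ∀ μ : ℂ, Module.End.HasEigenvalue
    (Matrix.toLin' (M.map (Complex.ofReal : ℝ → ℂ))) μ → μ.re < 0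

/-- The geometric multiplicity of `μ` as a (complex) eigenvalue of the real matrix `F`:
the dimension over `ℂ` of the kernel of `F - μ I`. -/
noncomputable def geomMult {n : ℕ} (F : Matrix (Fin n) (Fin n) ℝ) (μ : ℂ) : ℕ :=
  Module.finrank ℂ (Module.End.eigenspace
    (Matrix.toLin' (F.map (Complex.ofReal : ℝ → ℂ))) μ)

/-- Complexification does not increase the rank of a real matrix (we only need `≤`). -/
lemma rank_map_le_of_rank_eq_one {n : ℕ} (H : Matrix (Fin n) (Fin n) ℝ)
    (hH : H.rank = 1) : (H.map (Complex.ofReal : ℝ → ℂ)).rank ≤ 1 := by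
  set Hc := H.map (Complex.ofReal : ℝ → ℂ) with hHc
  -- the real column space is 1-dimensional
  have h1 : Module.finrank ℝ (Submodule.span ℝ (Set.range Hᵀ)) ≤ 1 := by
    rw [Matrix.rank, Matrix.range_mulVecLin] at hH
    exact hH.le
  obtain ⟨v, hv⟩ := finrank_le_one_iff.mp h1
  -- every column of H is a real multiple of v
  have hcol : ∀ i, ∃ c : ℝ, Hᵀ i = c • (v : Fin n → ℝ) := by
    intro i
    have hmem : Hᵀ i ∈ Submodule.span ℝ (Set.range Hᵀ) :=
      Submodule.subset_span (Set.mem_range_self i)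
    obtain ⟨c, hc⟩ := hv ⟨Hᵀ i, hmem⟩
    exact ⟨c, by simpa using congrArg Subtype.val hc.symm⟩
  set vc : Fin n → ℂ := fun j => ((v : Fin n → ℝ) j : ℂ) with hvc
  have hle : Submodule.span ℂ (Set.range Hcᵀ) ≤ ℂ ∙ vc := by
    rw [Submodule.span_le]
    rintro x ⟨i, rfl⟩
    obtain ⟨c, hc⟩ := hcol i
    refine Submodule.mem_span_singleton.mpr ⟨(c : ℂ), ?_⟩
    funext j
    have := congrFun hc j
    simp only [Matrix.transpose_apply, Pi.smul_apply, smul_eq_mul] at this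
    simp [Hc, vc, Matrix.map_apply, Matrix.transpose_apply, this]
  calc Hc.rank = Module.finrank ℂ (Submodule.span ℂ (Set.range Hcᵀ)) := by
        rw [Matrix.rank, Matrix.range_mulVecLin]; rfl
    _ ≤ Module.finrank ℂ (ℂ ∙ vc) := Submodule.finrank_mono hle
    _ ≤ 1 := by
        refine le_trans (finrank_span_le_card ({vc} : Set (Fin n → ℂ))) ?_
        simp

/-- If `F + α H` is Hurwitz for some rank-one real matrix `H` and some real
`α`, then every complex eigenvalue of `F` with nonnegative real part has geometric
multiplicity at most one. -/
theorem geomMult_le_one_of_rank_one_stabilizable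
    (n : ℕ) (hn : 1 ≤ n) (F : Matrix (Fin n) (Fin n) ℝ)
    (h : ∃ (H : Matrix (Fin n) (Fin n) ℝ) (α : ℝ), H.rank = 1 ∧ IsHurwitz (F + α • H)) :
    ∀ μ : ℂ,
      Module.End.HasEigenvalue (Matrix.toLin' (F.map (Complex.ofReal : ℝ → ℂ))) μ →
      0 ≤ μ.re → geomMult F μ ≤ 1 := by
  intro μ hμ hre
  by_contra hgt
  push_neg at hgt
  obtain ⟨H, α, hH, hHur⟩ := h
  set Fc := F.map (Complex.ofReal : ℝ → ℂ) with hFc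
  set Hc := H.map (Complex.ofReal : ℝ → ℂ) with hHc
  set E := Module.End.eigenspace (Matrix.toLin' Fc) μ with hE
  set K := LinearMap.ker Hc.mulVecLin with hK
  have hpin : Module.finrank ℂ (Fin n → ℂ) = n := by simp
  -- kernel of Hc is big
  have hrankc : Hc.rank ≤ 1 := rank_map_le_of_rank_eq_one H hH
  have hrn := LinearMap.finrank_range_add_finrank_ker Hc.mulVecLin
  rw [hpin] at hrn
  have hkerK : n - 1 ≤ Module.finrank ℂ K := by
    rw [hK]
    have : Hc.rank = Module.finrank ℂ (LinearMap.range Hc.mulVecLin) := rfl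
    omega
  -- eigenspace has dimension ≥ 2
  have hE2 : 2 ≤ Module.finrank ℂ E := hgt
  -- their intersection is nonzero
  have hsum := Submodule.finrank_sup_add_finrank_inf_eq E K
  have hsup : Module.finrank ℂ ↥(E ⊔ K) ≤ n := by
    have := Submodule.finrank_le (E ⊔ K)
    rwa [hpin] at this
  have hinf : 0 < Module.finrank ℂ ↥(E ⊓ K) := by omega
  haveI : Nontrivial ↥(E ⊓ K) := Module.nontrivial_of_finrank_pos hinf
  obtain ⟨x, hx⟩ := exists_ne (0 : ↥(E ⊓ K))
  set v : Fin n → ℂ := (x : Fin n → ℂ) with hv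
  have hv0 : v ≠ 0 := fun hc => hx (Subtype.ext hc)
  have hmem : (x : Fin n → ℂ) ∈ E ⊓ K := x.2
  have hvE : Matrix.toLin' Fc v = μ • v := Module.End.mem_eigenspace_iff.mp hmem.1
  have hvK : Hc.mulVec v = 0 := hmem.2
  -- v is an eigenvector of (F + α H) for μ
  have hmap : (F + α • H).map (Complex.ofReal : ℝ → ℂ) = Fc + (α : ℂ) • Hc := by
    ext i j
    simp [Fc, Hc, Matrix.map_apply, Matrix.add_apply, Matrix.smul_apply]
  have hvFc : Fc.mulVec v = μ • v := by rwa [Matrix.toLin'_apply] at hvE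
  have heig : Matrix.toLin' ((F + α • H).map (Complex.ofReal : ℝ → ℂ)) v = μ • v := by
    rw [hmap, Matrix.toLin'_apply, Matrix.add_mulVec, Matrix.smul_mulVec,
      hvFc, hvK, smul_zero, add_zero]
  have hev : Module.End.HasEigenvalue
      (Matrix.toLin' ((F + α • H).map (Complex.ofReal : ℝ → ℂ))) μ :=
    Module.End.hasEigenvalue_of_hasEigenvector
      ⟨Module.End.mem_eigenspace_iff.mpr heig, hv0⟩
  have := hHur μ hev
  linarith
end

section
/- Let n ≥ 1, let F be an n×n real matrix, and let b ∈ ℝⁿ be a column vector. Suppose there exists a symmetric positive definite n×n real matrix P such that F·P + P·Fᵀ − 2·b·bᵀ is negative definite. Then, with k = bᵀ·P⁻¹, the matrix F + α·b·k is Hurwitz for every real α ≤ −1. -/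
open Matrix

namespace HurwitzAux

open scoped ComplexOrder

variable {n : ℕ}

lemma map_mulVec_ofReal (M : Matrix (Fin n) (Fin n) ℝ) (v : Fin n → ℝ) :
    (M.map (Complex.ofReal : ℝ → ℂ)) *ᵥ (fun i => (v i : ℂ)) = fun i => ((M *ᵥ v) i : ℂ) := by
  funext i
  exact (RingHom.map_mulVec Complex.ofRealHom M v i).symm

lemma mulVec_star_ofReal (M : Matrix (Fin n) (Fin n) ℝ) (w : Fin n → ℂ) :
    (M.map (Complex.ofReal : ℝ → ℂ)) *ᵥ (star w) = star ((M.map (Complex.ofReal : ℝ → ℂ)) *ᵥ w) := by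
  funext i
  simp [Matrix.mulVec, dotProduct, Matrix.map_apply, star_sum, Complex.star_def,
    _root_.map_mul, Complex.conj_ofReal]

/-- Complexification of a real positive definite (symmetric) matrix is positive definite. -/
lemma map_mul_ofReal (M N : Matrix (Fin n) (Fin n) ℝ) :
    (M * N).map (Complex.ofReal : ℝ → ℂ)
      = M.map (Complex.ofReal : ℝ → ℂ) * N.map (Complex.ofReal : ℝ → ℂ) := by
  ext i j
  exact RingHom.map_matrix_mul M N i j Complex.ofRealHom

lemma star_dotProduct_flip (u v : Fin n → ℂ) : star v ⬝ᵥ u = star (star u ⬝ᵥ v) := by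
  simp [dotProduct, star_sum, mul_comm]

/-- Complexification of a real positive definite (symmetric) matrix is positive definite. -/
lemma posDef_map {M : Matrix (Fin n) (Fin n) ℝ} (hM : M.PosDef) :
    (M.map (Complex.ofReal : ℝ → ℂ)).PosDef := by
  have hsym : ∀ i j, M j i = M i j := by
    intro i j
    have := congrFun (congrFun hM.1 i) j
    simpa [Matrix.conjTranspose_apply] using this
  have hT : Mᵀ = M := by
    ext i j; simp [Matrix.transpose_apply, hsym]
  refine Matrix.PosDef.of_dotProduct_mulVec_pos ?_ ?_
  · ext i j
    simp [Matrix.conjTranspose_apply, Matrix.map_apply, Complex.star_def, Complex.conj_ofReal,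
      hsym i j]
  · intro v hv
    set x : Fin n → ℝ := fun i => (v i).re with hx
    set y : Fin n → ℝ := fun i => (v i).im with hy
    set xc : Fin n → ℂ := fun i => ((x i : ℝ) : ℂ) with hxc
    set yc : Fin n → ℂ := fun i => ((y i : ℝ) : ℂ) with hyc
    have hv_eq : v = xc + Complex.I • yc := by
      funext i
      apply Complex.ext <;> simp [hxc, hyc, hx, hy]
    have hstar : star v = xc - Complex.I • yc := by
      funext i
      apply Complex.ext <;> simp [hxc, hyc, hx, hy]
    set Mc := M.map (Complex.ofReal : ℝ → ℂ) with hMc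
    have hmx : Mc *ᵥ xc = fun i => ((M *ᵥ x) i : ℂ) := map_mulVec_ofReal M x
    have hmy : Mc *ᵥ yc = fun i => ((M *ᵥ y) i : ℂ) := map_mulVec_ofReal M y
    have hdot : ∀ (a c : Fin n → ℝ),
        (fun i => ((a i : ℝ) : ℂ)) ⬝ᵥ (fun i => ((c i : ℝ) : ℂ)) = ((a ⬝ᵥ c : ℝ) : ℂ) := by
      intro a c
      simp [dotProduct]
    have hxy : x ⬝ᵥ (M *ᵥ y) = y ⬝ᵥ (M *ᵥ x) := by
      rw [Matrix.dotProduct_mulVec, ← Matrix.mulVec_transpose, hT, dotProduct_comm]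
    have key : star v ⬝ᵥ Mc *ᵥ v = ((x ⬝ᵥ (M *ᵥ x) + y ⬝ᵥ (M *ᵥ y) : ℝ) : ℂ) := by
      rw [hstar, hv_eq, Matrix.mulVec_add, Matrix.mulVec_smul]
      rw [sub_dotProduct, dotProduct_add, dotProduct_add,
        smul_dotProduct, dotProduct_smul, dotProduct_smul,
        smul_dotProduct]
      simp only [smul_eq_mul, hmx, hmy]
      simp only [hxc, hyc, hdot]
      rw [hxy]
      push_cast
      linear_combination (-((y ⬝ᵥ (M *ᵥ y) : ℝ) : ℂ)) * Complex.I_sq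
    rw [key]
    have hxyne : x ≠ 0 ∨ y ≠ 0 := by
      by_contra h
      push_neg at h
      apply hv
      rw [hv_eq]
      funext i
      simp [hxc, hyc, h.1, h.2]
    have hpos : 0 < x ⬝ᵥ (M *ᵥ x) + y ⬝ᵥ (M *ᵥ y) := by
      have h1 : (0:ℝ) ≤ x ⬝ᵥ (M *ᵥ x) := hM.posSemidef.dotProduct_mulVec_nonneg x
      have h2 : (0:ℝ) ≤ y ⬝ᵥ (M *ᵥ y) := hM.posSemidef.dotProduct_mulVec_nonneg y
      rcases hxyne with h | h
      · have := hM.dotProduct_mulVec_pos h; simp only [star_trivial] at this; linarith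
      · have := hM.dotProduct_mulVec_pos h; simp only [star_trivial] at this; linarith
    exact_mod_cast Complex.real_lt_real.mpr hpos

end HurwitzAux

open HurwitzAux in
/-- If `P` is symmetric positive definite and `F P + P Fᵀ - 2 b bᵀ` is
negative definite, then with `k = bᵀ P⁻¹` the matrix `F + α b k` is Hurwitz for every
`α ≤ -1`. -/
theorem hurwitz_of_lyapunov_ineq
    (n : ℕ) (hn : 1 ≤ n) (F : Matrix (Fin n) (Fin n) ℝ) (b : Fin n → ℝ)
    (P : Matrix (Fin n) (Fin n) ℝ) (hP : P.PosDef)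
    (hneg : (-(F * P + P * Fᵀ - (2 : ℝ) • Matrix.vecMulVec b b)).PosDef) :
    ∀ α : ℝ, α ≤ -1 →
      IsHurwitz (F + α • Matrix.vecMulVec b (Matrix.vecMul b P⁻¹)) := by
  intro α hα μ hμ
  open scoped ComplexOrder in
  -- basic facts about P
  have hPdet : IsUnit P.det := isUnit_iff_ne_zero.mpr hP.det_pos.ne'
  have hPsym : Pᵀ = P := by
    ext i j
    have := congrFun (congrFun hP.1 j) i
    simpa [Matrix.conjTranspose_apply] using this.symm
  have hPinv : P⁻¹ * P = 1 := Matrix.nonsing_inv_mul P hPdet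
  have hPinv' : P * P⁻¹ = 1 := Matrix.mul_nonsing_inv P hPdet
  set k : Fin n → ℝ := Matrix.vecMul b P⁻¹ with hk
  set A : Matrix (Fin n) (Fin n) ℝ := F + α • Matrix.vecMulVec b k with hA
  -- key matrix identities
  have hkP : k ᵥ* P = b := by
    rw [hk, Matrix.vecMul_vecMul, hPinv, Matrix.vecMul_one]
  have hPk : P *ᵥ k = b := by
    have hinvsym : (P⁻¹)ᵀ = P⁻¹ := by rw [Matrix.transpose_nonsing_inv, hPsym]
    have : k = P⁻¹ *ᵥ b := by
      rw [hk, ← hinvsym, Matrix.vecMul_transpose, hinvsym]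
    rw [this, Matrix.mulVec_mulVec, hPinv', Matrix.one_mulVec]
  have hbkP : Matrix.vecMulVec b k * P = Matrix.vecMulVec b b := by
    ext i j
    simp only [Matrix.mul_apply, Matrix.vecMulVec_apply]
    have : ∑ l, b i * k l * P l j = b i * (k ᵥ* P) j := by
      simp [Matrix.vecMul, dotProduct, Finset.mul_sum, mul_assoc]
    rw [this, hkP]
  have hPkb : P * (Matrix.vecMulVec b k)ᵀ = Matrix.vecMulVec b b := by
    have htr : (Matrix.vecMulVec b k)ᵀ = Matrix.vecMulVec k b := by
      ext i j; simp [Matrix.vecMulVec_apply, mul_comm]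
    rw [htr]
    ext i j
    simp only [Matrix.mul_apply, Matrix.vecMulVec_apply]
    have : ∑ l, P i l * (k l * b j) = (P *ᵥ k) i * b j := by
      simp [Matrix.mulVec, dotProduct, Finset.sum_mul, mul_assoc]
    rw [this, hPk, mul_comm]
  have hQeq : -(A * P + P * Aᵀ)
      = -(F * P + P * Fᵀ - (2 : ℝ) • Matrix.vecMulVec b b)
        + (-(2 * α + 2)) • Matrix.vecMulVec b b := by
    rw [hA]
    rw [Matrix.add_mul, Matrix.transpose_add, Matrix.mul_add]
    rw [Matrix.transpose_smul, Matrix.smul_mul, Matrix.mul_smul, hbkP, hPkb]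
    module
  -- positive semidefiniteness of the rank-one correction
  have hbb : ((-(2 * α + 2)) • Matrix.vecMulVec b b).PosSemidef := by
    have hc : (0:ℝ) ≤ -(2 * α + 2) := by linarith
    refine Matrix.PosSemidef.of_dotProduct_mulVec_nonneg ?_ ?_
    · ext i j
      simp [Matrix.conjTranspose_apply, Matrix.vecMulVec_apply, mul_comm]
    · intro x
      have hmv : Matrix.vecMulVec b b *ᵥ x = (b ⬝ᵥ x) • b := by
        funext i
        simp only [Matrix.mulVec, Matrix.vecMulVec_apply, dotProduct, Pi.smul_apply,
          smul_eq_mul]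
        rw [Finset.sum_mul]
        exact Finset.sum_congr rfl fun l _ => by ring
      rw [Matrix.smul_mulVec, dotProduct_smul, hmv]
      simp only [star_trivial, smul_eq_mul, dotProduct_smul]
      have : x ⬝ᵥ b = b ⬝ᵥ x := dotProduct_comm x b
      rw [this]
      have := mul_self_nonneg (b ⬝ᵥ x)
      positivity
  have hQ : (-(A * P + P * Aᵀ)).PosDef := by
    rw [hQeq]
    exact hneg.add_posSemidef hbb
  -- complexify
  set Ac := A.map (Complex.ofReal : ℝ → ℂ) with hAc
  set Pc := P.map (Complex.ofReal : ℝ → ℂ) with hPc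
  obtain ⟨v, hv_mem, hv0⟩ := hμ.exists_hasEigenvector
  have hev : Ac *ᵥ v = μ • v := by
    have := hv_mem
    rw [Module.End.mem_eigenspace_iff] at this
    simpa [Matrix.toLin'_apply] using this
  have hv0' : v ≠ 0 := hv0
  set Pinvc := (P⁻¹).map (Complex.ofReal : ℝ → ℂ) with hPinvc
  set u := Pinvc *ᵥ v with hu
  have hPPinv : Pc * Pinvc = 1 := by
    rw [hPc, hPinvc, ← map_mul_ofReal, hPinv']
    ext i j
    simp [Matrix.map_apply, Matrix.one_apply]
    split <;> simp_all
  have hPcu : Pc *ᵥ u = v := by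
    rw [hu, Matrix.mulVec_mulVec, hPPinv, Matrix.one_mulVec]
  have hu0 : u ≠ 0 := by
    intro h
    apply hv0'
    rw [← hPcu, h, Matrix.mulVec_zero]
  set Qc := (-(A * P + P * Aᵀ)).map (Complex.ofReal : ℝ → ℂ) with hQcdef
  have hQc : Qc = -(Ac * Pc + Pc * Acᵀ) := by
    rw [hQcdef, hAc, hPc]
    ext i j
    simp only [Matrix.map_apply, Matrix.neg_apply, Matrix.add_apply, Matrix.mul_apply,
      Matrix.transpose_apply]
    push_cast
    ring
  have hPcT : Pcᵀ = Pc := by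
    rw [hPc]
    ext i j
    simp only [Matrix.transpose_apply, Matrix.map_apply]
    rw [show P j i = Pᵀ i j from rfl, hPsym]
  set t := star u ⬝ᵥ Pc *ᵥ u with ht
  have htpos : 0 < t := (posDef_map hP).dotProduct_mulVec_pos hu0
  have htre : 0 < t.re := by
    rw [Complex.lt_def] at htpos
    simpa using htpos.1
  have htim : t.im = 0 := by
    rw [Complex.lt_def] at htpos
    simpa using htpos.2.symm
  have htconj : (starRingEnd ℂ) t = t := Complex.conj_eq_iff_im.mpr htim
  set s := star u ⬝ᵥ Qc *ᵥ u with hs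
  have hspos : 0 < s := (posDef_map hQ).dotProduct_mulVec_pos hu0
  have hsre : 0 < s.re := by
    rw [Complex.lt_def] at hspos
    simpa using hspos.1
  -- compute s
  have hterm1 : star u ⬝ᵥ (Ac * Pc) *ᵥ u = μ * t := by
    rw [← Matrix.mulVec_mulVec, hPcu, hev, dotProduct_smul, smul_eq_mul, ht, hPcu]
  have hterm2 : star u ⬝ᵥ (Pc * Acᵀ) *ᵥ u = (starRingEnd ℂ) μ * t := by
    rw [← Matrix.mulVec_mulVec, Matrix.dotProduct_mulVec]
    have h1 : star u ᵥ* Pc = star v := by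
      rw [← hPcT, Matrix.vecMul_transpose, hPc, mulVec_star_ofReal, ← hPc, hPcu]
    rw [h1, Matrix.dotProduct_mulVec, Matrix.vecMul_transpose, hAc, mulVec_star_ofReal,
      ← hAc, hev]
    rw [star_smul, smul_dotProduct, smul_eq_mul]
    have hvu : star v ⬝ᵥ u = t := by
      rw [star_dotProduct_flip u v, ← hPcu, ← ht]
      simpa [Complex.star_def] using htconj
    rw [hvu, Complex.star_def]
  have hs_eq : s = -(μ * t + (starRingEnd ℂ) μ * t) := by
    rw [hs, hQc, Matrix.neg_mulVec, dotProduct_neg, Matrix.add_mulVec,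
      dotProduct_add, hterm1, hterm2]
  have hsre' : s.re = -(2 * μ.re * t.re) := by
    have hcomb : μ * t + (starRingEnd ℂ) μ * t = (μ + (starRingEnd ℂ) μ) * t := by ring
    rw [hs_eq, hcomb, Complex.add_conj]
    simp [Complex.mul_re, htim]
  rw [hsre'] at hsre
  nlinarith [htre, hsre]
end

section
/- Let n ≥ 1, let Q be a symmetric n×n real matrix and let b ∈ ℝⁿ be a column vector. Then there exists a column vector y ∈ ℝⁿ such that Q − b·yᵀ − y·bᵀ is negative definite if, and only if, there exists a real scalar β > 0 such that Q − β·b·bᵀ is negative definite. -/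
open Matrix

section Aux

variable {n : ℕ}

lemma dot_vecMulVec (w v x : Fin n → ℝ) :
    x ⬝ᵥ (Matrix.vecMulVec w v *ᵥ x) = (x ⬝ᵥ w) * (v ⬝ᵥ x) := by
  simp [vecMulVec_apply, mulVec, dotProduct, Finset.mul_sum, Finset.sum_mul]
  ring_nf
  rw [Finset.sum_comm]

lemma dot_self_nonneg (x : Fin n → ℝ) : 0 ≤ x ⬝ᵥ x :=
  Finset.sum_nonneg fun i _ => mul_self_nonneg _

lemma dot_self_pos {x : Fin n → ℝ} (hx : x ≠ 0) : 0 < x ⬝ᵥ x :=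
  lt_of_le_of_ne (dot_self_nonneg x) fun h => hx (dotProduct_self_eq_zero.mp h.symm)

lemma cauchy (x y : Fin n → ℝ) : (x ⬝ᵥ y) ^ 2 ≤ (x ⬝ᵥ x) * (y ⬝ᵥ y) := by
  have := Finset.sum_mul_sq_le_sq_mul_sq Finset.univ x y
  simpa [dotProduct, sq] using this

lemma exists_eps (hn : 1 ≤ n) (N : Matrix (Fin n) (Fin n) ℝ)
    (h : ∀ x : Fin n → ℝ, x ≠ 0 → 0 < x ⬝ᵥ (N *ᵥ x)) :
    ∃ ε : ℝ, 0 < ε ∧ ∀ x : Fin n → ℝ, ε * (x ⬝ᵥ x) ≤ x ⬝ᵥ (N *ᵥ x) := by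
  set S : Set (Fin n → ℝ) := {x | x ⬝ᵥ x = 1} with hS
  have hdcont : Continuous fun x : Fin n → ℝ => x ⬝ᵥ x := by
    unfold dotProduct; fun_prop
  have hqcont : Continuous fun x : Fin n → ℝ => x ⬝ᵥ (N *ᵥ x) := by
    simp only [dotProduct, mulVec]; fun_prop
  have hclosed : IsClosed S := isClosed_eq hdcont continuous_const
  have hbdd : Bornology.IsBounded S := by
    rw [isBounded_iff_forall_norm_le]
    refine ⟨1, fun x hx => ?_⟩
    rw [pi_norm_le_iff_of_nonneg zero_le_one]
    intro i
    rw [Real.norm_eq_abs, abs_le_one_iff_mul_self_le_one]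
    calc x i * x i ≤ ∑ j, x j * x j :=
          Finset.single_le_sum (fun j _ => mul_self_nonneg (x j)) (Finset.mem_univ i)
      _ = 1 := hx
  have hcomp : IsCompact S := Metric.isCompact_of_isClosed_isBounded hclosed hbdd
  have hne : S.Nonempty := by
    refine ⟨Pi.single ⟨0, hn⟩ 1, ?_⟩
    simp [hS, dotProduct, Pi.single_apply]
  obtain ⟨x₀, hx₀S, hx₀min⟩ := hcomp.exists_isMinOn hne hqcont.continuousOn
  have hx₀ne : x₀ ≠ 0 := by
    intro h0
    rw [h0] at hx₀S
    simp [hS, dotProduct] at hx₀S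
  refine ⟨x₀ ⬝ᵥ (N *ᵥ x₀), h x₀ hx₀ne, fun x => ?_⟩
  rcases eq_or_ne x 0 with rfl | hx
  · simp
  · have hs : 0 < x ⬝ᵥ x := dot_self_pos hx
    set c : ℝ := Real.sqrt (x ⬝ᵥ x) with hc
    have hcpos : 0 < c := Real.sqrt_pos.mpr hs
    have hc2 : c * c = x ⬝ᵥ x := Real.mul_self_sqrt hs.le
    have hz : (c⁻¹ • x) ∈ S := by
      simp only [hS, Set.mem_setOf_eq, smul_dotProduct, dotProduct_smul, smul_eq_mul]
      field_simp
      nlinarith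
    have this : x₀ ⬝ᵥ (N *ᵥ x₀) ≤ (c⁻¹ • x) ⬝ᵥ (N *ᵥ (c⁻¹ • x)) := hx₀min hz
    have hq : (c⁻¹ • x) ⬝ᵥ (N *ᵥ (c⁻¹ • x)) = c⁻¹ * c⁻¹ * (x ⬝ᵥ (N *ᵥ x)) := by
      rw [mulVec_smul, smul_dotProduct, dotProduct_smul]
      simp [mul_assoc]
    rw [hq] at this
    have h2 : (x₀ ⬝ᵥ (N *ᵥ x₀)) * (c * c) ≤ x ⬝ᵥ (N *ᵥ x) := by
      have hcc : 0 < c * c := mul_pos hcpos hcpos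
      calc (x₀ ⬝ᵥ (N *ᵥ x₀)) * (c * c) ≤ (c⁻¹ * c⁻¹ * (x ⬝ᵥ (N *ᵥ x))) * (c * c) := by
            exact mul_le_mul_of_nonneg_right this hcc.le
        _ = x ⬝ᵥ (N *ᵥ x) := by field_simp
    rw [← hc2]; linarith

lemma quad_y (Q : Matrix (Fin n) (Fin n) ℝ) (b y x : Fin n → ℝ) :
    x ⬝ᵥ ((-(Q - Matrix.vecMulVec b y - Matrix.vecMulVec y b)) *ᵥ x)
      = -(x ⬝ᵥ (Q *ᵥ x)) + (x ⬝ᵥ b) * (y ⬝ᵥ x) + (x ⬝ᵥ y) * (b ⬝ᵥ x) := by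
  simp [neg_mulVec, sub_mulVec, dotProduct_neg, dotProduct_sub, dot_vecMulVec]
  ring

lemma quad_beta (Q : Matrix (Fin n) (Fin n) ℝ) (b x : Fin n → ℝ) (β : ℝ) :
    x ⬝ᵥ ((-(Q - β • Matrix.vecMulVec b b)) *ᵥ x)
      = -(x ⬝ᵥ (Q *ᵥ x)) + β * ((x ⬝ᵥ b) * (b ⬝ᵥ x)) := by
  simp [neg_mulVec, sub_mulVec, dotProduct_neg, dotProduct_sub, smul_mulVec,
    dotProduct_smul, dot_vecMulVec]
  ring

lemma herm_beta {Q : Matrix (Fin n) (Fin n) ℝ} (hQ : Q.IsSymm) (b : Fin n → ℝ) (β : ℝ) :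
    (-(Q - β • Matrix.vecMulVec b b)).IsHermitian := by
  rw [Matrix.IsHermitian]
  ext i j
  simp only [conjTranspose_apply, Matrix.neg_apply, Matrix.sub_apply, Matrix.smul_apply, vecMulVec_apply,
    smul_eq_mul, star_trivial]
  rw [hQ.apply i j]
  ring

end Aux

/-- elimination/projection lemma: For a symmetric real matrix `Q` and a
vector `b`, there is a vector `y` with `Q - b yᵀ - y bᵀ` negative definite iff there is
a scalar `β > 0` with `Q - β b bᵀ` negative definite. -/
theorem projection_lemma
    (n : ℕ) (hn : 1 ≤ n) (Q : Matrix (Fin n) (Fin n) ℝ) (hQ : Q.IsSymm) (b : Fin n → ℝ) :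
    (∃ y : Fin n → ℝ,
        (-(Q - Matrix.vecMulVec b y - Matrix.vecMulVec y b)).PosDef) ↔
    (∃ β : ℝ, 0 < β ∧ (-(Q - β • Matrix.vecMulVec b b)).PosDef) := by
  constructor
  · rintro ⟨y, hy⟩
    have hpos : ∀ x : Fin n → ℝ, x ≠ 0 →
        0 < x ⬝ᵥ ((-(Q - Matrix.vecMulVec b y - Matrix.vecMulVec y b)) *ᵥ x) := by
      intro x hx
      have := (posDef_iff_dotProduct_mulVec.mp hy).2 hx
      simpa using this
    obtain ⟨ε, hε, heps⟩ := exists_eps hn _ hpos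
    set Y : ℝ := y ⬝ᵥ y with hY
    have hYnn : 0 ≤ Y := dot_self_nonneg y
    set β : ℝ := (2 * Y + ε) / ε with hβdef
    have hβ : 0 < β := by positivity
    have hβε : β * ε = 2 * Y + ε := by rw [hβdef]; field_simp
    refine ⟨β, hβ, posDef_iff_dotProduct_mulVec.mpr ⟨herm_beta hQ b β, fun x hx => ?_⟩⟩
    have hs : 0 < x ⬝ᵥ x := dot_self_pos hx
    have hkey := heps x
    rw [quad_y] at hkey
    have hcs : (x ⬝ᵥ y) ^ 2 ≤ (x ⬝ᵥ x) * Y := cauchy x y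
    have hyx : y ⬝ᵥ x = x ⬝ᵥ y := dotProduct_comm y x
    have hbx : b ⬝ᵥ x = x ⬝ᵥ b := dotProduct_comm b x
    rw [hyx, hbx] at hkey
    have hst : (star x : Fin n → ℝ) = x := star_trivial x
    rw [hst, quad_beta, hbx]
    set u : ℝ := x ⬝ᵥ b
    set v : ℝ := x ⬝ᵥ y
    set s : ℝ := x ⬝ᵥ x
    -- hkey : ε * s ≤ -(x ⬝ᵥ Q *ᵥ x) + u * v + v * u
    -- goal : 0 < -(x ⬝ᵥ Q *ᵥ x) + β * (u * u)
    nlinarith [sq_nonneg (β * u - v), mul_pos hβ hs, mul_pos hε hs,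
      mul_le_mul_of_nonneg_left hkey hβ.le, sq_nonneg u, sq_nonneg v]
  · rintro ⟨β, hβ, hpd⟩
    refine ⟨(β / 2) • b, ?_⟩
    have heq : Q - Matrix.vecMulVec b ((β / 2) • b) - Matrix.vecMulVec ((β / 2) • b) b
        = Q - β • Matrix.vecMulVec b b := by
      ext i j
      simp [vecMulVec_apply]
      ring
    rw [heq]
    exact hpd
end

section
/- Let G be a finite simple graph on N ≥ 2 vertices. Then N is an eigenvalue of the Laplacian matrix L(G) if, and only if, the complement graph Gᶜ is disconnected. -/
open Matrix Polynomial

/-- The real Laplacian matrix of a simple graph on `Fin N`. -/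
noncomputable def lapR {N : ℕ} (G : SimpleGraph (Fin N)) : Matrix (Fin N) (Fin N) ℝ :=
  letI := Classical.decRel G.Adj
  G.lapMatrix ℝ

/-- The Laplacian eigenvalues of a simple graph on `Fin N`, listed in nondecreasing order
with multiplicity; `sortedLapEigs G i` is the `(i+1)`-st smallest Laplacian eigenvalue. -/
noncomputable def sortedLapEigs {N : ℕ} (G : SimpleGraph (Fin N)) : Fin N → ℝ :=
  letI := Classical.decRel G.Adj
  let f : Fin N → ℝ := (SimpleGraph.posSemidef_lapMatrix ℝ G).isHermitian.eigenvalues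
  f ∘ Tuple.sort f

lemma lap_add_lap_compl {N : ℕ} (G : SimpleGraph (Fin N)) [DecidableRel G.Adj]
    [DecidableRel Gᶜ.Adj] :
    G.lapMatrix ℝ + Gᶜ.lapMatrix ℝ = (N : ℝ) • (1 : Matrix (Fin N) (Fin N) ℝ)
      - Matrix.of (fun _ _ => (1 : ℝ)) := by
  ext i j
  simp only [SimpleGraph.lapMatrix, SimpleGraph.degMatrix, SimpleGraph.adjMatrix,
    Matrix.add_apply, Matrix.sub_apply, Matrix.diagonal_apply, Matrix.of_apply,
    Matrix.smul_apply, Matrix.one_apply, smul_ite, smul_eq_mul, mul_one, mul_zero]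
  by_cases h : i = j
  · subst h
    have hle : G.degree i + 1 ≤ N := by
      have := SimpleGraph.degree_lt_card_verts (G := G) i
      simpa [Fintype.card_fin] using this
    have hdn : Gᶜ.degree i = N - 1 - G.degree i := by
      simpa [Fintype.card_fin] using SimpleGraph.degree_compl (G := G) (v := i)
    have hd : (Gᶜ.degree i : ℝ) = (N : ℝ) - 1 - G.degree i := by
      rw [hdn, Nat.cast_sub (by omega), Nat.cast_sub (by omega), Nat.cast_one]
    simp only [if_pos rfl, if_pos trivial]
    rw [if_neg (G.irrefl (v := i)), if_neg (Gᶜ.irrefl (v := i)), hd]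
    ring
  · have hadj : Gᶜ.Adj i j ↔ ¬ G.Adj i j := by
      simp [SimpleGraph.compl_adj, h]
    simp only [if_neg h]
    by_cases hA : G.Adj i j
    · rw [if_pos hA, if_neg (by simp [hadj, hA])]; ring
    · rw [if_neg hA, if_pos (hadj.mpr hA)]; ring

lemma eig_iff {N : ℕ} (G : SimpleGraph (Fin N)) [DecidableRel G.Adj]
    [DecidableRel Gᶜ.Adj] (x : Fin N → ℝ) :
    G.lapMatrix ℝ *ᵥ x = (N : ℝ) • x ↔
      (Gᶜ.lapMatrix ℝ *ᵥ x = 0 ∧ ∑ v, x v = 0) := by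
  have key := lap_add_lap_compl G
  constructor
  · intro h
    have h2 : Gᶜ.lapMatrix ℝ *ᵥ x = fun _ => -(∑ v, x v) := by
      have := congrArg (· *ᵥ x) key
      simp only [Matrix.add_mulVec, Matrix.sub_mulVec, Matrix.smul_mulVec,
        Matrix.one_mulVec, h] at this
      funext v
      have hv := congrFun this v
      simp only [Pi.add_apply, Pi.sub_apply, Pi.smul_apply, smul_eq_mul] at hv
      have hJ : (Matrix.of (fun _ _ => (1:ℝ)) *ᵥ x) v = ∑ u, x u := by
        simp [Matrix.mulVec, dotProduct]
      rw [hJ] at hv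
      linarith
    have hsum : ∑ v, x v = 0 := by
      have hpsd := (SimpleGraph.posSemidef_lapMatrix ℝ Gᶜ).dotProduct_mulVec_nonneg x
      rw [h2] at hpsd
      simp only [dotProduct, star_trivial, Pi.neg_apply] at hpsd
      have h3 : ∑ v : Fin N, x v * -(∑ u : Fin N, x u) = -((∑ v : Fin N, x v)^2) := by
        rw [← Finset.sum_mul]; ring
      rw [h3] at hpsd
      nlinarith [sq_nonneg (∑ v : Fin N, x v)]
    refine ⟨?_, hsum⟩
    rw [h2]
    funext v
    simp [hsum]
  · rintro ⟨h1, h2⟩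
    have := congrArg (· *ᵥ x) key
    simp only [Matrix.add_mulVec, Matrix.sub_mulVec, Matrix.smul_mulVec,
      Matrix.one_mulVec, h1, add_zero] at this
    rw [this]
    funext v
    have hJ : (Matrix.of (fun _ _ => (1:ℝ)) *ᵥ x) v = ∑ u, x u := by
      simp [Matrix.mulVec, dotProduct]
    simp [hJ, h2]

/-- For a graph `G` on `N ≥ 2` vertices, `N` is a Laplacian eigenvalue of
`G` iff the complement graph `Gᶜ` is disconnected. -/
theorem card_isLapEigenvalue_iff_compl_disconnected {N : ℕ} (hN : 2 ≤ N)
    (G : SimpleGraph (Fin N)) :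
    Module.End.HasEigenvalue (Matrix.toLin' (lapR G)) (N : ℝ) ↔ ¬ Gᶜ.Connected := by
  classical
  letI : DecidableRel G.Adj := Classical.decRel _
  have hlapR : lapR G = G.lapMatrix ℝ := rfl
  constructor
  · intro h hconn
    obtain ⟨x, hx, hx0⟩ := h.exists_hasEigenvector
    rw [hlapR] at hx
    have hx' : G.lapMatrix ℝ *ᵥ x = (N : ℝ) • x := by
      simpa [Matrix.toLin'_apply] using hx
    rw [eig_iff] at hx'
    obtain ⟨h1, h2⟩ := hx'
    have hconst : ∀ i j, x i = x j := fun i j =>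
      (SimpleGraph.lapMatrix_mulVec_eq_zero_iff_forall_reachable (G := Gᶜ) (x := x)).mp
        (by simp [Matrix.toLin'_apply, h1]) i j (hconn.preconnected i j)
    have : x = 0 := by
      funext v
      have hsum : ∑ u : Fin N, x u = (N : ℝ) * x v := by
        rw [Finset.sum_congr rfl (fun u _ => hconst u v)]
        simp [Finset.card_univ, mul_comm]
      rw [h2] at hsum
      have hNpos : (0:ℝ) < N := by positivity
      simp only [Pi.zero_apply]
      nlinarith
    exact hx0 this
  · intro hconn
    have hne : Nonempty (Fin N) := ⟨⟨0, by omega⟩⟩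
    rw [SimpleGraph.connected_iff] at hconn
    push_neg at hconn
    have hpre : ¬ Gᶜ.Preconnected := fun h => (hconn h).false ⟨0, by omega⟩
    rw [SimpleGraph.Preconnected] at hpre
    push_neg at hpre
    obtain ⟨i, j, hij⟩ := hpre
    set S : Finset (Fin N) := Finset.univ.filter (fun v => Gᶜ.Reachable i v) with hS
    have hiS : i ∈ S := Finset.mem_filter.mpr ⟨Finset.mem_univ _, SimpleGraph.Reachable.refl i⟩
    have hjS : j ∉ S := by simp [hS, hij]
    set a : ℕ := S.card with ha
    set b : ℕ := Sᶜ.card with hb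
    have hapos : 0 < a := Finset.card_pos.mpr ⟨i, hiS⟩
    have hbpos : 0 < b := Finset.card_pos.mpr ⟨j, by simp [hjS]⟩
    set x : Fin N → ℝ := fun v => if v ∈ S then (b:ℝ) else -(a:ℝ) with hx
    have hx0 : x ≠ 0 := by
      intro h
      have hb0 : (b:ℝ) = 0 := by simpa [hx, hiS] using congrFun h i
      have : b = 0 := by exact_mod_cast hb0
      omega
    have hsum : ∑ v, x v = 0 := by
      have h1 : Finset.univ.filter (· ∈ S) = S := by ext v; simp
      have h2 : Finset.univ.filter (fun v => v ∉ S) = Sᶜ := by ext v; simp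
      rw [hx, Finset.sum_ite, Finset.sum_const, Finset.sum_const, h1, h2, ← ha, ← hb]
      simp [nsmul_eq_mul]
      ring
    have hker : Gᶜ.lapMatrix ℝ *ᵥ x = 0 := by
      have := (SimpleGraph.lapMatrix_mulVec_eq_zero_iff_forall_adj (G := Gᶜ) (x := x)).mpr ?_
      · simpa [Matrix.toLin'_apply] using this
      · intro u v huv
        have hmem : u ∈ S ↔ v ∈ S := by
          simp only [hS, Finset.mem_filter, Finset.mem_univ, true_and]
          exact ⟨fun h => h.trans huv.reachable, fun h => h.trans huv.symm.reachable⟩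
        simp only [hx]
        by_cases hu : u ∈ S
        · rw [if_pos hu, if_pos (hmem.mp hu)]
        · rw [if_neg hu, if_neg (fun h => hu (hmem.mpr h))]
    apply Module.End.hasEigenvalue_of_hasEigenvector (x := x)
    refine ⟨?_, hx0⟩
    rw [Module.End.mem_eigenspace_iff, hlapR, Matrix.toLin'_apply]
    exact (eig_iff G x).mpr ⟨hker, hsum⟩
end

section
/- Let G₂ be the simple graph on vertex set {1,2,3,4,5,6} with edge set {{1,2},{1,5},{1,6},{2,3},{2,4},{3,4},{3,6},{4,5},{5,6}} (the triangular prism), and let G₂ + e{1,3} be the graph obtained by adding the edge {1,3}. Then the Laplacian eigenvalues of G₂ + e{1,3}, in nondecreasing order, are 0, 4 − √3, 3, 4, 5, 4 + √3; in particular λ₂(G₂ + e{1,3})/λ₆(G₂ + e{1,3}) = (4 − √3)/(4 + √3) < 2/5 = λ₂(G₂)/λ₆(G₂), so adding this edge strictly decreases the eigenratio. -/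
open Matrix

/-- The graph `G₂` of the paper (the triangular prism), on vertices `0, …, 5`
(labelled `1, …, 6` in the paper). -/
def G₂6 : SimpleGraph (Fin 6) :=
  SimpleGraph.fromEdgeSet
    {s(0, 1), s(0, 4), s(0, 5), s(1, 2), s(1, 3), s(2, 3), s(2, 5), s(3, 4), s(4, 5)}

/- ### Auxiliary general lemmas -/

open Polynomial in
lemma my_charpoly_conj {n : Type*} [Fintype n] [DecidableEq n] {R : Type*} [CommRing R]
    (U V D : Matrix n n R) (h1 : U * V = 1) :
    (U * D * V).charpoly = D.charpoly := by
  have hcm : charmatrix (U * D * V) = U.map C * charmatrix D * V.map C := by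
    unfold charmatrix
    simp only [RingHom.mapMatrix_apply, Matrix.map_mul, mul_sub, sub_mul]
    congr 1
    have hsc : U.map C * Matrix.scalar n (X : R[X]) = Matrix.scalar n (X : R[X]) * U.map C :=
      ((Matrix.scalar_commute (X : R[X]) (fun r' => Commute.all _ _) (U.map C))).symm
    rw [hsc, mul_assoc, ← Matrix.map_mul, h1, Matrix.map_one C C.map_zero C.map_one, mul_one]
  have hdet1 : (U.map C).det * (V.map C).det = 1 := by
    rw [← det_mul, ← Matrix.map_mul, h1, Matrix.map_one C C.map_zero C.map_one, det_one]
  rw [Matrix.charpoly, hcm, det_mul, det_mul, mul_right_comm, hdet1, one_mul, Matrix.charpoly]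

open Polynomial in
lemma my_charpoly_diag {n : Type*} [Fintype n] [DecidableEq n] {R : Type*} [CommRing R]
    (d : n → R) : (diagonal d).charpoly = ∏ i, (X - C (d i)) := by
  have : charmatrix (diagonal d) = diagonal (fun i => (X : R[X]) - C (d i)) := by
    ext i j
    by_cases h : i = j
    · subst h; simp
    · simp [h, diagonal_apply_ne _ h]
  rw [Matrix.charpoly, this, det_diagonal]

open Polynomial in
lemma my_charpoly_eq_prod_eigs {n : ℕ} {A : Matrix (Fin n) (Fin n) ℝ} (hA : A.IsHermitian) :
    A.charpoly = ∏ i, (X - C (hA.eigenvalues i)) := by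
  have hspec : A = (hA.eigenvectorUnitary : Matrix (Fin n) (Fin n) ℝ) *
      diagonal (RCLike.ofReal ∘ hA.eigenvalues) *
      (star hA.eigenvectorUnitary : Matrix (Fin n) (Fin n) ℝ) := hA.spectral_theorem
  have h1 : (hA.eigenvectorUnitary : Matrix (Fin n) (Fin n) ℝ) *
      (star hA.eigenvectorUnitary : Matrix (Fin n) (Fin n) ℝ) = 1 :=
    hA.eigenvectorUnitary.2.2
  calc A.charpoly = ((hA.eigenvectorUnitary : Matrix (Fin n) (Fin n) ℝ) *
      diagonal (RCLike.ofReal ∘ hA.eigenvalues) *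
      (star hA.eigenvectorUnitary : Matrix (Fin n) (Fin n) ℝ)).charpoly := by rw [← hspec]
    _ = (diagonal (RCLike.ofReal ∘ hA.eigenvalues)).charpoly := my_charpoly_conj _ _ _ h1
    _ = ∏ i, (X - C (hA.eigenvalues i)) := by
        rw [my_charpoly_diag]; congr 1

lemma my_mono_eq_of_multiset_eq {n : ℕ} {f g : Fin n → ℝ} (hf : Monotone f) (hg : Monotone g)
    (h : Multiset.map f Finset.univ.val = Multiset.map g Finset.univ.val) : f = g := by
  have hperm : (List.ofFn f).Perm (List.ofFn g) := by
    simpa using h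
  exact List.ofFn_injective (hperm.eq_of_sortedLE hf.sortedLE_ofFn hg.sortedLE_ofFn)

open Polynomial in
lemma my_sorted_of_charpoly {n : ℕ} {A : Matrix (Fin n) (Fin n) ℝ} (hA : A.IsHermitian)
    (μ : Fin n → ℝ) (hmono : Monotone μ)
    (hcp : A.charpoly = ∏ i, (X - C (μ i))) :
    hA.eigenvalues ∘ Tuple.sort hA.eigenvalues = μ := by
  have h1 := my_charpoly_eq_prod_eigs hA
  rw [hcp] at h1
  have key : ∀ h : Fin n → ℝ, (∏ i, (X - C (h i))).roots = Multiset.map h Finset.univ.val := by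
    intro h
    rw [Finset.prod_eq_multiset_prod]
    rw [show Multiset.map (fun i => X - C (h i)) Finset.univ.val
        = Multiset.map (fun a => X - C a) (Multiset.map h Finset.univ.val) by
      rw [Multiset.map_map]; rfl]
    exact roots_multiset_prod_X_sub_C _
  have hms : Multiset.map μ Finset.univ.val = Multiset.map hA.eigenvalues Finset.univ.val := by
    rw [← key, ← key, h1]
  have hperm : Multiset.map (hA.eigenvalues ∘ Tuple.sort hA.eigenvalues) Finset.univ.val
      = Multiset.map hA.eigenvalues Finset.univ.val := by
    rw [← Multiset.map_map]
    congr 1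
    have h2 := congrArg Finset.val (Finset.map_univ_equiv (Tuple.sort hA.eigenvalues))
    simpa [Finset.map_val] using h2
  exact my_mono_eq_of_multiset_eq (Tuple.monotone_sort _) hmono (hperm.trans hms.symm)

open Polynomial in
lemma my_sortedLapEigs_eq {N : ℕ} (G : SimpleGraph (Fin N)) (B : Matrix (Fin N) (Fin N) ℝ)
    (μ : Fin N → ℝ) (hmono : Monotone μ)
    (hAB : (letI := Classical.decRel G.Adj; SimpleGraph.lapMatrix ℝ G) = B)
    (hcp : B.charpoly = ∏ i, (X - C (μ i))) :
    sortedLapEigs G = μ := by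
  subst hAB
  unfold sortedLapEigs
  exact my_sorted_of_charpoly _ μ hmono hcp

/- ### The concrete graphs -/

def H1 : SimpleGraph (Fin 6) where
  Adj i j := (!![false,true,true,false,true,true;
                 true,false,true,true,false,false;
                 true,true,false,true,false,true;
                 false,true,true,false,true,false;
                 true,false,false,true,false,true;
                 true,false,true,false,true,false] i j : Bool)
  symm := by constructor; intro a b; fin_cases a <;> fin_cases b <;> decide
  loopless := by constructor; show ∀ x, _; decide

def H2 : SimpleGraph (Fin 6) where
  Adj i j := (!![false,true,false,false,true,true;
                 true,false,true,true,false,false;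
                 false,true,false,true,false,true;
                 false,true,true,false,true,false;
                 true,false,false,true,false,true;
                 true,false,true,false,true,false] i j : Bool)
  symm := by constructor; intro a b; fin_cases a <;> fin_cases b <;> decide
  loopless := by constructor; show ∀ x, _; decide

instance : DecidableRel H1.Adj := fun i j => inferInstanceAs (Decidable (_ = true))
instance : DecidableRel H2.Adj := fun i j => inferInstanceAs (Decidable (_ = true))

lemma hG1 : G₂6 ⊔ SimpleGraph.edge 0 2 = H1 := by
  ext i j
  simp only [G₂6, SimpleGraph.sup_adj, SimpleGraph.fromEdgeSet_adj, SimpleGraph.edge_adj,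
    Set.mem_insert_iff, Set.mem_singleton_iff]
  fin_cases i <;> fin_cases j <;> decide

lemma hG2 : G₂6 = H2 := by
  ext i j
  simp only [G₂6, SimpleGraph.fromEdgeSet_adj, Set.mem_insert_iff, Set.mem_singleton_iff]
  fin_cases i <;> fin_cases j <;> decide

def Lm : Matrix (Fin 6) (Fin 6) ℝ :=
  !![4,-1,-1,0,-1,-1; -1,3,-1,-1,0,0; -1,-1,4,-1,0,-1; 0,-1,-1,3,-1,0; -1,0,0,-1,3,-1; -1,0,-1,0,-1,3]

def Lm2 : Matrix (Fin 6) (Fin 6) ℝ :=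
  !![3,-1,0,0,-1,-1; -1,3,-1,-1,0,0; 0,-1,3,-1,0,-1; 0,-1,-1,3,-1,0; -1,0,0,-1,3,-1; -1,0,-1,0,-1,3]

lemma hlap1' : SimpleGraph.lapMatrix ℝ H1 = Lm := by
  have hdeg : ∀ i, H1.degree i = ![4,3,4,3,3,3] i := by decide
  ext i j
  fin_cases i <;> fin_cases j <;>
    norm_num [SimpleGraph.lapMatrix, SimpleGraph.degMatrix, SimpleGraph.adjMatrix, hdeg,
      Matrix.diagonal_apply, H1, Lm] <;> decide

lemma hlap1 : (letI := Classical.decRel H1.Adj; SimpleGraph.lapMatrix ℝ H1) = Lm := by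
  have h : (letI := Classical.decRel H1.Adj; SimpleGraph.lapMatrix ℝ H1)
      = SimpleGraph.lapMatrix ℝ H1 := by
    congr!
  exact h.trans hlap1'

lemma hlap2' : SimpleGraph.lapMatrix ℝ H2 = Lm2 := by
  have hdeg : ∀ i, H2.degree i = 3 := by decide
  ext i j
  fin_cases i <;> fin_cases j <;>
    norm_num [SimpleGraph.lapMatrix, SimpleGraph.degMatrix, SimpleGraph.adjMatrix, hdeg,
      Matrix.diagonal_apply, H2, Lm2] <;> decide

lemma hlap2 : (letI := Classical.decRel H2.Adj; SimpleGraph.lapMatrix ℝ H2) = Lm2 := by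
  have h : (letI := Classical.decRel H2.Adj; SimpleGraph.lapMatrix ℝ H2)
      = SimpleGraph.lapMatrix ℝ H2 := by
    congr!
  exact h.trans hlap2'

/- ### Eigendecomposition of `Lm` (prism + edge) -/

@[simp] lemma my_cons_val_five {α : Type*} {m : ℕ} (x : α) (u : Fin (m + 5) → α) :
    vecCons x u 5 = vecHead (vecTail (vecTail (vecTail (vecTail u)))) := rfl

noncomputable abbrev sq3 : ℝ := Real.sqrt 3

lemma hs3 : sq3 ^ 2 = 3 := Real.sq_sqrt (by norm_num)

noncomputable def Pm : Matrix (Fin 6) (Fin 6) ℝ :=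
  !![1, 2 - sq3, 1, -1, -1, 2 + sq3;
     1, -1, 1, -1, 1, -1;
     1, -2 + sq3, 1, 1, -1, -2 - sq3;
     1, 1 - sq3, -2, 1, 0, 1 + sq3;
     1, -1 + sq3, -2, -1, 0, -1 - sq3;
     1, 1, 1, 1, 1, 1]

noncomputable def Qm : Matrix (Fin 6) (Fin 6) ℝ :=
  !![1/6, 1/6, 1/6, 1/6, 1/6, 1/6;
     1/12, -1/6 - sq3/12, -1/12, -1/12 - sq3/12, 1/12 + sq3/12, 1/6 + sq3/12;
     1/12, 1/12, 1/12, -1/6, -1/6, 1/12;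
     -1/6, -1/6, 1/6, 1/6, -1/6, 1/6;
     -1/4, 1/4, -1/4, 0, 0, 1/4;
     1/12, -1/6 + sq3/12, -1/12, -1/12 + sq3/12, 1/12 - sq3/12, 1/6 - sq3/12]

noncomputable def μv : Fin 6 → ℝ := ![0, 4 - sq3, 3, 4, 5, 4 + sq3]

set_option maxHeartbeats 1000000 in
lemma hPQ : Pm * Qm = 1 := by
  have hs := hs3
  ext i j
  fin_cases i <;> fin_cases j <;>
    simp [Pm, Qm, Matrix.mul_apply, Fin.sum_univ_six, Matrix.one_apply] <;>
    (try ring_nf) <;> linarith [hs]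

set_option maxHeartbeats 1000000 in
lemma hLP : Lm * Pm = Pm * Matrix.diagonal μv := by
  have hs := hs3
  ext i j
  fin_cases i <;> fin_cases j <;>
    simp [Pm, Lm, μv, Matrix.mul_apply, Fin.sum_univ_six, Matrix.diagonal, Matrix.one_apply] <;>
    (try ring_nf) <;> linarith [hs]

open Polynomial in
lemma hcp1 : Lm.charpoly = ∏ i, (X - C (μv i)) := by
  have hfact : Lm = Pm * Matrix.diagonal μv * Qm := by
    calc Lm = Lm * (Pm * Qm) := by rw [hPQ, mul_one]
    _ = (Lm * Pm) * Qm := by rw [mul_assoc]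
    _ = (Pm * Matrix.diagonal μv) * Qm := by rw [hLP]
  rw [hfact, my_charpoly_conj _ _ _ hPQ, my_charpoly_diag]

/- ### Eigendecomposition of `Lm2` (the prism itself) -/

noncomputable def P2 : Matrix (Fin 6) (Fin 6) ℝ :=
  !![1, 1, -1, -1, -1, -1;
     1, -1, -1, -1, 1, 1;
     1, -1, 0, 1, 0, -1;
     1, -1, 1, 0, -1, 0;
     1, 1, 1, 0, 1, 0;
     1, 1, 0, 1, 0, 1]

noncomputable def Q2 : Matrix (Fin 6) (Fin 6) ℝ :=
  !![1/6, 1/6, 1/6, 1/6, 1/6, 1/6;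
     1/6, -1/6, -1/6, -1/6, 1/6, 1/6;
     -1/6, -1/6, -1/6, 1/3, 1/3, -1/6;
     -1/6, -1/6, 1/3, -1/6, -1/6, 1/3;
     -1/6, 1/6, 1/6, -1/3, 1/3, -1/6;
     -1/6, 1/6, -1/3, 1/6, -1/6, 1/3]

def μv2 : Fin 6 → ℝ := ![0, 2, 3, 3, 5, 5]

set_option maxHeartbeats 1000000 in
lemma hPQ2 : P2 * Q2 = 1 := by
  ext i j
  fin_cases i <;> fin_cases j <;>
    simp [P2, Q2, Matrix.mul_apply, Fin.sum_univ_six, Matrix.one_apply, Matrix.vecHead, Matrix.vecTail] <;> norm_num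

set_option maxHeartbeats 1000000 in
lemma hLP2 : Lm2 * P2 = P2 * Matrix.diagonal μv2 := by
  ext i j
  fin_cases i <;> fin_cases j <;>
    simp [P2, Lm2, μv2, Matrix.mul_apply, Fin.sum_univ_six, Matrix.diagonal, Matrix.vecHead, Matrix.vecTail] <;> norm_num

open Polynomial in
lemma hcp2 : Lm2.charpoly = ∏ i, (X - C (μv2 i)) := by
  have hfact : Lm2 = P2 * Matrix.diagonal μv2 * Q2 := by
    calc Lm2 = Lm2 * (P2 * Q2) := by rw [hPQ2, mul_one]
    _ = (Lm2 * P2) * Q2 := by rw [mul_assoc]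
    _ = (P2 * Matrix.diagonal μv2) * Q2 := by rw [hLP2]
  rw [hfact, my_charpoly_conj _ _ _ hPQ2, my_charpoly_diag]

/- ### Monotonicity -/

lemma sqrt3_bounds : 1 ≤ sq3 ∧ sq3 ≤ 2 := by
  constructor <;> nlinarith [hs3, Real.sqrt_nonneg 3]

lemma mono1 : Monotone μv := by
  obtain ⟨h1, h2⟩ := sqrt3_bounds
  intro i j hij
  fin_cases i <;> fin_cases j
  all_goals first
    | (exfalso; revert hij; decide)
    | (norm_num [μv]; linarith)
    | norm_num [μv]

lemma mono2 : Monotone μv2 := by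
  intro i j hij
  fin_cases i <;> fin_cases j
  all_goals first
    | (exfalso; revert hij; decide)
    | norm_num [μv2]

/- ### Main theorem -/

/-- Adding the edge `{1,3}` (here `{0,2}`) to `G₂` yields a graph whose
Laplacian eigenvalues are `0, 4 - √3, 3, 4, 5, 4 + √3`, so its eigenratio
`(4 - √3)/(4 + √3)` is strictly smaller than `r(G₂) = 2/5`. -/
theorem addEdge_decreases_eigenratio :
    sortedLapEigs (G₂6 ⊔ SimpleGraph.edge 0 2) =
      ![0, 4 - Real.sqrt 3, 3, 4, 5, 4 + Real.sqrt 3] ∧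
    sortedLapEigs (G₂6 ⊔ SimpleGraph.edge 0 2) 1 /
        sortedLapEigs (G₂6 ⊔ SimpleGraph.edge 0 2) 5 =
      (4 - Real.sqrt 3) / (4 + Real.sqrt 3) ∧
    sortedLapEigs G₂6 1 / sortedLapEigs G₂6 5 = 2 / 5 ∧
    (4 - Real.sqrt 3) / (4 + Real.sqrt 3) < 2 / 5 := by
  have e1 : sortedLapEigs (G₂6 ⊔ SimpleGraph.edge 0 2) = μv := by
    rw [hG1]; exact my_sortedLapEigs_eq H1 Lm μv mono1 hlap1 hcp1
  have e2 : sortedLapEigs G₂6 = μv2 := by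
    rw [hG2]; exact my_sortedLapEigs_eq H2 Lm2 μv2 mono2 hlap2 hcp2
  have hlt : (4 - Real.sqrt 3) / (4 + Real.sqrt 3) < 2 / 5 := by
    have h0 : (0:ℝ) < 4 + Real.sqrt 3 := by positivity
    rw [div_lt_div_iff₀ h0 (by norm_num)]
    nlinarith [Real.sq_sqrt (show (0:ℝ) ≤ 3 by norm_num), Real.sqrt_nonneg 3]
  refine ⟨e1, ?_, ?_, hlt⟩
  · rw [e1]; simp [μv]
  · rw [e2]; norm_num [μv2]
end
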